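/- Fix real $k' < 0$, integer $n \geq 1$, and reals $a' > 0$, $x$ with $x > 0$. Then $\int_{\mathbb{R}} \frac{e^{itx}}{(t + ik')^n}\,dt = \frac{2\pi i^n}{(n-1)!} x^{n-1} e^{k'x}$, where the integral is taken as an improper Riemann integral (principal value). -/

import Mathlib

open Complex intervalIntegral
open MeasureTheory Set Filter

lemma lap_integrable (z : ℂ) (hz : 0 < z.re) (n : ℕ) :
    IntegrableOn (fun s : ℝ => (s : ℂ) ^ n * Complex.exp (-z * s)) (Ioi 0) := by
  have hmeas : AEStronglyMeasurable (fun s : ℝ => (s : ℂ) ^ n * Complex.exp (-z * s))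
      (volume.restrict (Ioi 0)) := by
    apply Continuous.aestronglyMeasurable
    exact (Complex.continuous_ofReal.pow n).mul
      ((continuous_const.mul Complex.continuous_ofReal).cexp)
  have hbound : IntegrableOn (fun s : ℝ => s ^ (n : ℝ) * Real.exp (-z.re * s ^ (1:ℝ)))
      (Ioi 0) := integrableOn_rpow_mul_exp_neg_mul_rpow (lt_of_lt_of_le neg_one_lt_zero n.cast_nonneg) zero_lt_one hz
  refine Integrable.mono' hbound hmeas ?_
  filter_upwards [ae_restrict_mem measurableSet_Ioi] with s hs
  rw [norm_mul, norm_pow, Complex.norm_real, Real.norm_eq_abs, abs_of_pos hs,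
    Complex.norm_exp]
  simp only [neg_mul, neg_re, Complex.mul_re, Complex.ofReal_re, Complex.ofReal_im,
    mul_zero, sub_zero]
  rw [← Real.rpow_natCast s n, Real.rpow_one]

lemma lap_tendsto (z : ℂ) (hz : 0 < z.re) (n : ℕ) :
    Filter.Tendsto (fun s : ℝ => (s : ℂ) ^ n * Complex.exp (-z * s)) atTop (nhds 0) := by
  refine squeeze_zero_norm' ?_ (tendsto_rpow_mul_exp_neg_mul_atTop_nhds_zero (n:ℝ) _ hz)
  filter_upwards [eventually_ge_atTop (0:ℝ)] with s hs
  rw [norm_mul, norm_pow, Complex.norm_real, Real.norm_eq_abs, _root_.abs_of_nonneg hs,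
    Complex.norm_exp, Real.rpow_natCast]
  have h2 : (-z * s).re = -z.re * s := by simp [Complex.mul_re]
  rw [h2]

lemma laplace (z : ℂ) (hz : 0 < z.re) : ∀ n : ℕ,
    ∫ s in Ioi (0:ℝ), (s : ℂ) ^ n * Complex.exp (-z * s) = n.factorial / z ^ (n + 1) := by
  have hz0 : z ≠ 0 := fun h => by simp [h] at hz
  intro n
  induction n with
  | zero =>
      have hd : ∀ s ∈ Ioi (0:ℝ), HasDerivAt (fun s : ℝ => -Complex.exp (-z * s) / z)
          ((s:ℂ) ^ 0 * Complex.exp (-z * s)) s := by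
        intro s _
        have h1 : HasDerivAt (fun s : ℝ => -z * (s:ℂ)) (-z) s := by
          simpa using (Complex.ofRealCLM.hasDerivAt (x := s)).const_mul (-z)
        have := (h1.cexp.neg.div_const z)
        refine this.congr_deriv ?_
        field_simp
      have := integral_Ioi_of_hasDerivAt_of_tendsto
        (f := fun s : ℝ => -Complex.exp (-z * s) / z)
        (f' := fun s : ℝ => (s:ℂ) ^ 0 * Complex.exp (-z * s)) (a := 0) (m := 0)
        ?_ hd (lap_integrable z hz 0) ?_
      · rw [this]; field_simp; simp
      · exact ((((continuous_const.mul Complex.continuous_ofReal).cexp).neg.div_const z).continuousWithinAt)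
      · have h := lap_tendsto z hz 0
        simpa [neg_div] using (h.div_const z).neg
  | succ n ih =>
      have hd : ∀ s ∈ Ioi (0:ℝ), HasDerivAt
          (fun s : ℝ => -(s:ℂ) ^ (n+1) * Complex.exp (-z * s) / z)
          ((s:ℂ) ^ (n+1) * Complex.exp (-z * s)
            - ((n:ℂ)+1) / z * ((s:ℂ) ^ n * Complex.exp (-z * s))) s := by
        intro s _
        have hre : HasDerivAt (fun s : ℝ => (s:ℂ)) 1 s := Complex.ofRealCLM.hasDerivAt
        have h1 : HasDerivAt (fun s : ℝ => -z * (s:ℂ)) (-z) s := by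
          simpa using hre.const_mul (-z)
        have hp : HasDerivAt (fun s : ℝ => (s:ℂ) ^ (n+1)) (((n:ℂ)+1) * (s:ℂ) ^ n) s := by
          simpa using (hasDerivAt_pow (n+1) ((s:ℝ):ℂ)).comp_ofReal
        have := ((hp.neg.mul h1.cexp).div_const z)
        refine this.congr_deriv ?_
        simp only [Pi.neg_apply]
        field_simp
        ring
      have key := integral_Ioi_of_hasDerivAt_of_tendsto
        (f := fun s : ℝ => -(s:ℂ) ^ (n+1) * Complex.exp (-z * s) / z)
        (f' := fun s : ℝ => (s:ℂ) ^ (n+1) * Complex.exp (-z * s)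
            - ((n:ℂ)+1) / z * ((s:ℂ) ^ n * Complex.exp (-z * s))) (a := 0) (m := 0)
        ((((Complex.continuous_ofReal.pow (n+1)).neg.mul
          ((continuous_const.mul Complex.continuous_ofReal).cexp)).div_const z).continuousWithinAt) hd
        ((lap_integrable z hz (n+1)).sub ((lap_integrable z hz n).const_mul _)) ?_
      · rw [MeasureTheory.integral_sub (lap_integrable z hz (n+1))
          ((lap_integrable z hz n).const_mul _), MeasureTheory.integral_const_mul, ih] at key
        simp only [Complex.ofReal_zero, ne_eq] at key
        have : ∫ s in Ioi (0:ℝ), (s:ℂ) ^ (n+1) * Complex.exp (-z * s)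
            = ((n:ℂ)+1) / z * ((n.factorial : ℂ) / z ^ (n+1)) := by
          have h0 : (-(0:ℂ) ^ (n+1) * Complex.exp (-z * 0) / z) = 0 := by simp
          rw [h0] at key
          linear_combination key
        rw [this, Nat.factorial_succ]
        push_cast
        rw [div_mul_div_comm, ← pow_succ']
      · have h := lap_tendsto z hz (n+1)
        simpa [neg_div, neg_mul] using (h.div_const z).neg

lemma denom_norm_sq (k' t : ℝ) : ‖(t:ℂ) + I * k'‖ ^ 2 = t ^ 2 + k' ^ 2 := by
  rw [Complex.sq_norm, Complex.normSq_apply]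
  simp
  ring

lemma denom_norm_ge (k' t : ℝ) : |k'| ≤ ‖(t:ℂ) + I * k'‖ := by
  have h := denom_norm_sq k' t
  nlinarith [norm_nonneg ((t:ℂ) + I * k'), sq_nonneg t, _root_.sq_abs k', abs_nonneg k']

lemma integrable_pow_inv (k' : ℝ) (hk : k' ≠ 0) (n : ℕ) (hn : 2 ≤ n) (x : ℝ) :
    MeasureTheory.Integrable (fun t : ℝ => Complex.exp (I * t * x) / ((t:ℂ) + I * k') ^ n) := by
  have hm : ∀ t : ℝ, min 1 (k' ^ 2) * (1 + t ^ 2) ≤ ‖(t:ℂ) + I * k'‖ ^ 2 := by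
    intro t
    rw [denom_norm_sq]
    rcases le_total (1:ℝ) (k'^2) with h | h
    · rw [min_eq_left h]; nlinarith
    · rw [min_eq_right h]; nlinarith [sq_nonneg t, sq_nonneg k', mul_le_of_le_one_left (sq_nonneg t) h]
  have hne : ∀ t : ℝ, ((t:ℂ) + I * k') ≠ 0 := by
    intro t h
    have : ((t:ℂ) + I * k').im = 0 := by rw [h]; rfl
    simp at this
    exact hk this
  have hcont : Continuous (fun t : ℝ => Complex.exp (I * t * x) / ((t:ℂ) + I * k') ^ n) := by
    apply Continuous.div
    · fun_prop
    · fun_prop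
    · exact fun t => pow_ne_zero _ (hne t)
  set C : ℝ := (|k'| ^ (n - 2) * min 1 (k' ^ 2))⁻¹ with hC
  have hmin : 0 < min 1 (k' ^ 2) := lt_min one_pos (by positivity)
  refine MeasureTheory.Integrable.mono' ((integrable_inv_one_add_sq).const_mul C)
    hcont.aestronglyMeasurable ?_
  refine Filter.Eventually.of_forall fun t => ?_
  have hnorm1 : ‖Complex.exp (I * t * x)‖ = 1 := by
    rw [Complex.norm_exp]
    have : (I * t * x).re = 0 := by simp
    rw [this, Real.exp_zero]
  rw [norm_div, hnorm1, norm_pow]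
  have hlb : |k'| ^ (n - 2) * (min 1 (k' ^ 2) * (1 + t ^ 2)) ≤ ‖(t:ℂ) + I * k'‖ ^ n := by
    have h1 : ‖(t:ℂ) + I * k'‖ ^ n = ‖(t:ℂ) + I * k'‖ ^ (n - 2) * ‖(t:ℂ) + I * k'‖ ^ 2 := by
      rw [← pow_add]; congr 1; omega
    rw [h1]
    have h2 : |k'| ^ (n - 2) ≤ ‖(t:ℂ) + I * k'‖ ^ (n - 2) :=
      pow_le_pow_left₀ (abs_nonneg k') (denom_norm_ge k' t) _
    have h3 := hm t
    have := mul_le_mul h2 h3 (by positivity) (norm_nonneg _ |>.trans (le_refl _) |> fun _ => by positivity)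
    · nlinarith [pow_nonneg (abs_nonneg k') (n-2), hm t, sq_nonneg t,
        pow_nonneg (norm_nonneg ((t:ℂ) + I * k')) (n-2)]
  have hpos : 0 < |k'| ^ (n - 2) * (min 1 (k' ^ 2) * (1 + t ^ 2)) := by positivity
  calc (1 : ℝ) / ‖(t:ℂ) + I * k'‖ ^ n ≤ 1 / (|k'| ^ (n - 2) * (min 1 (k' ^ 2) * (1 + t ^ 2))) := by
        apply one_div_le_one_div_of_le hpos hlb
    _ = C * (1 + t ^ 2)⁻¹ := by
        rw [hC]; field_simp

open FourierTransform Real in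
lemma ff_fourier (k' : ℝ) (hk : k' < 0) (n : ℕ) (hn : 1 ≤ n) (ξ : ℝ) :
    𝓕 (Set.indicator (Ioi (0:ℝ)) (fun s : ℝ => (s:ℂ) ^ (n-1) * Complex.exp (k' * s))) ξ
      = ((n-1).factorial : ℂ) / (2 * Real.pi * I * ξ - k') ^ n := by
  rw [Real.fourier_real_eq_integral_exp_smul]
  have h1 : (fun v : ℝ => Complex.exp (↑(-2 * Real.pi * v * ξ) * I) •
      Set.indicator (Ioi (0:ℝ)) (fun s : ℝ => (s:ℂ) ^ (n-1) * Complex.exp (k' * s)) v)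
      = Set.indicator (Ioi (0:ℝ)) (fun v : ℝ =>
        (v:ℂ) ^ (n-1) * Complex.exp (-(2 * Real.pi * I * ξ - k') * v)) := by
    funext v
    by_cases hv : v ∈ Ioi (0:ℝ)
    · rw [Set.indicator_of_mem hv, Set.indicator_of_mem hv, smul_eq_mul, mul_comm,
        mul_assoc, ← Complex.exp_add]
      congr 2
      push_cast
      ring
    · rw [Set.indicator_of_notMem hv, Set.indicator_of_notMem hv, smul_zero]
  rw [h1, MeasureTheory.integral_indicator measurableSet_Ioi]
  have hz : 0 < (2 * Real.pi * I * ξ - k').re := by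
    simp [Complex.sub_re, Complex.mul_re, Complex.I_re, Complex.I_im]
    linarith
  have h3 := laplace (2 * Real.pi * I * ξ - k') hz (n - 1)
  rw [Nat.sub_add_cancel hn] at h3
  rw [h3]

open FourierTransform Real MeasureTheory in
lemma main_integral (k' : ℝ) (hk : k' < 0) (n : ℕ) (hn : 2 ≤ n) (x : ℝ) (hx : 0 < x) :
    ∫ t : ℝ, Complex.exp (I * t * x) / ((t:ℂ) + I * k') ^ n
      = (2 * Real.pi * I ^ n / (Nat.factorial (n - 1)) : ℂ) * (x:ℂ) ^ (n-1)
        * Complex.exp (k' * x) := by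
  have hn1 : 1 ≤ n := le_trans (by norm_num) hn
  set f : ℝ → ℂ := Set.indicator (Ioi (0:ℝ))
    (fun s : ℝ => (s:ℂ) ^ (n-1) * Complex.exp (k' * s)) with hfdef
  set c : ℂ := ((n-1).factorial : ℂ) with hcdef
  have hIn : (I:ℂ) ^ n ≠ 0 := pow_ne_zero _ I_ne_zero
  have hc0 : c ≠ 0 := Nat.cast_ne_zero.2 (Nat.factorial_ne_zero _)
  have hπ : (0:ℝ) < 2 * Real.pi := by positivity
  -- integrability of f
  have hf : Integrable f := by
    rw [hfdef, MeasureTheory.integrable_indicator_iff measurableSet_Ioi]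
    have := lap_integrable (-(k':ℂ)) (by simpa using hk) (n-1)
    simpa using this
  -- Fourier transform of f
  have hFf : 𝓕 f = fun ξ : ℝ => c / (2 * Real.pi * I * ξ - k') ^ n :=
    funext fun ξ => ff_fourier k' hk n hn1 ξ
  -- rewrite 𝓕 f via composition
  have hfact : ∀ v : ℝ, (2 * Real.pi * I * v - k') ^ n
      = I ^ n * ((((2 * Real.pi * v : ℝ)):ℂ) + I * k') ^ n := by
    intro v
    have heq : (2 * (Real.pi:ℂ) * I * v - k') = I * ((((2 * Real.pi * v : ℝ)):ℂ) + I * k') := by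
      have hii : (I:ℂ) * (I * (k':ℂ)) = -(k':ℂ) := by rw [← mul_assoc, Complex.I_mul_I]; ring
      push_cast
      rw [mul_add, hii]
      ring
    rw [heq, mul_pow]
  have h0int : Integrable (fun t : ℝ => (1:ℂ) / ((t:ℂ) + I * k') ^ n) := by
    have := integrable_pow_inv k' hk.ne n hn 0
    simpa using this
  have hFint : Integrable (𝓕 f) := by
    rw [hFf]
    have h2 : Integrable (fun ξ : ℝ => (1:ℂ) / ((((2 * Real.pi * ξ : ℝ)):ℂ) + I * k') ^ n) := by
      have := h0int.comp_mul_left' (R := 2 * Real.pi) hπ.ne'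
      simpa using this
    have h3 : (fun ξ : ℝ => c / (2 * Real.pi * I * ξ - k') ^ n)
        = fun ξ : ℝ => (c / I ^ n) * ((1:ℂ) / ((((2 * Real.pi * ξ : ℝ)):ℂ) + I * k') ^ n) := by
      funext ξ
      rw [hfact ξ]
      field_simp
    rw [h3]
    exact h2.const_mul _
  -- continuity of f at x
  have hcx : ContinuousAt f x := by
    have hev : f =ᶠ[nhds x] fun s : ℝ => (s:ℂ) ^ (n-1) * Complex.exp (k' * s) := by
      filter_upwards [isOpen_Ioi.mem_nhds (show x ∈ Ioi (0:ℝ) from hx)] with s hs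
      exact Set.indicator_of_mem hs _
    exact ContinuousAt.congr (by fun_prop) hev.symm
  -- inversion
  have hinv := hf.fourierInv_fourier_eq hFint (v := x) hcx
  rw [Real.fourierInv_eq'] at hinv
  have hfx : f x = (x:ℂ) ^ (n-1) * Complex.exp (k' * x) :=
    Set.indicator_of_mem (show x ∈ Ioi (0:ℝ) from hx) _
  set G : ℝ → ℂ := fun t => Complex.exp (I * t * x) / ((t:ℂ) + I * k') ^ n with hGdef
  have hpt : (fun v : ℝ => Complex.exp ((↑(2 * Real.pi * (inner ℝ v x : ℝ)) : ℂ) * I) • 𝓕 f v)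
      = fun v : ℝ => (c / I ^ n) • G (2 * Real.pi * v) := by
    funext v
    rw [hFf]
    simp only [RCLike.inner_apply, conj_trivial, smul_eq_mul, hGdef]
    rw [hfact v]
    have hexp : Complex.exp ((↑(2 * Real.pi * (x * v)) : ℂ) * I)
        = Complex.exp (I * ((2 * Real.pi * v : ℝ) : ℂ) * x) := by
      congr 1
      push_cast
      ring
    rw [hexp]
    field_simp
  rw [hpt, MeasureTheory.integral_smul, MeasureTheory.Measure.integral_comp_mul_left G (2 * Real.pi),
    abs_of_pos (inv_pos.2 hπ), hfx] at hinv
  -- solve for the integral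
  rw [Complex.real_smul, smul_eq_mul] at hinv
  push_cast at hinv
  have hπC : (Real.pi : ℂ) ≠ 0 := Complex.ofReal_ne_zero.2 Real.pi_ne_zero
  have hstep : (2 * (Real.pi:ℂ) * I ^ n / c) * (c / I ^ n * ((2 * (Real.pi:ℂ))⁻¹ * ∫ y, G y))
      = ∫ y, G y := by
    field_simp
  calc ∫ t : ℝ, G t
      = (2 * (Real.pi:ℂ) * I ^ n / c) * (c / I ^ n * ((2 * (Real.pi:ℂ))⁻¹ * ∫ y, G y)) :=
        hstep.symm
    _ = (2 * Real.pi * I ^ n / (Nat.factorial (n - 1)) : ℂ) * (x:ℂ) ^ (n-1)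
        * Complex.exp (k' * x) := by
        rw [hinv, hcdef]
        push_cast
        ring

theorem residue_integral_pos (k' : ℝ) (hk : k' < 0) (n : ℕ) (hn : 1 ≤ n)
    (x : ℝ) (hx : 0 < x) :
    Filter.Tendsto
      (fun T : ℝ => ∫ t : ℝ in (-T)..T, Complex.exp (I * t * x) / ((t : ℂ) + I * k') ^ n)
      Filter.atTop
      (nhds ((2 * Real.pi * I ^ n / (Nat.factorial (n - 1)) : ℂ) *
        (x : ℂ) ^ (n - 1) * Complex.exp (k' * x))) := by
  rcases eq_or_lt_of_le hn with h1 | h2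
  · -- case n = 1
    subst h1
    have hne : ∀ t : ℝ, ((t:ℂ) + I * k') ≠ 0 := by
      intro t h
      have : ((t:ℂ) + I * k').im = 0 := by rw [h]; rfl
      simp at this
      exact hk.ne this
    set F : ℝ → ℂ := fun t => Complex.exp (I * t * x) / ((t:ℂ) + I * k') with hF
    set F2 : ℝ → ℂ := fun t => Complex.exp (I * t * x) / ((t:ℂ) + I * k') ^ 2 with hF2
    have hcexp : Continuous fun t : ℝ => Complex.exp (I * t * x) := by fun_prop
    have hcF : Continuous F := hcexp.div (by fun_prop) hne
    have hcF2 : Continuous F2 := hcexp.div (by fun_prop) (fun t => pow_ne_zero _ (hne t))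
    have hIx : (I * (x:ℂ)) ≠ 0 := mul_ne_zero I_ne_zero (Complex.ofReal_ne_zero.2 hx.ne')
    have hderiv : ∀ t : ℝ, HasDerivAt F (I * x * F t - F2 t) t := by
      intro t
      have hnum : HasDerivAt (fun t : ℝ => Complex.exp (I * t * x))
          (Complex.exp (I * t * x) * (I * x)) t := by
        have h0 : HasDerivAt (fun t : ℝ => I * (t:ℂ) * x) (I * x) t := by
          have := ((Complex.ofRealCLM.hasDerivAt (x := t)).const_mul I).mul_const (x:ℂ)
          simpa using this
        exact h0.cexp
      have hden : HasDerivAt (fun t : ℝ => (t:ℂ) + I * k') 1 t := by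
        simpa using (Complex.ofRealCLM.hasDerivAt (x := t)).add_const (I * k')
      have := hnum.div hden (hne t)
      refine this.congr_deriv ?_
      rw [hF, hF2]
      field_simp [hne t]
    have key : ∀ T : ℝ, (∫ t : ℝ in (-T)..T, F t)
        = ((F T - F (-T)) + ∫ t : ℝ in (-T)..T, F2 t) / (I * x) := by
      intro T
      have hparts : ∫ t : ℝ in (-T)..T, (I * (x:ℂ) * F t - F2 t) = F T - F (-T) := by
        apply integral_eq_sub_of_hasDerivAt (fun t _ => hderiv t)
        exact (((continuous_const.mul hcF).sub hcF2)).intervalIntegrable _ _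
      rw [intervalIntegral.integral_sub ((hcF.intervalIntegrable _ _).const_mul (I * (x:ℂ)))
        (hcF2.intervalIntegrable _ _), intervalIntegral.integral_const_mul] at hparts
      rw [eq_div_iff hIx]
      linear_combination hparts
    have hb : Filter.Tendsto (fun T : ℝ => F T) Filter.atTop (nhds 0) := by
      refine squeeze_zero_norm' ?_ tendsto_inv_atTop_zero
      filter_upwards [Filter.eventually_ge_atTop (1:ℝ)] with T hT
      · rw [hF, norm_div]
        have h1 : ‖Complex.exp (I * T * x)‖ = 1 := by
          rw [Complex.norm_exp]
          have : (I * (T:ℝ) * (x:ℝ)).re = 0 := by simp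
          rw [this, Real.exp_zero]
        rw [h1]
        rw [one_div]
        apply inv_anti₀ (by linarith)
        calc (T:ℝ) = |((T:ℂ) + I * k').re| := by
              have hre : ((T:ℂ) + I * k').re = T := by simp
              rw [hre, _root_.abs_of_nonneg (by linarith : (0:ℝ) ≤ T)]
          _ ≤ ‖(T:ℂ) + I * k'‖ := Complex.abs_re_le_norm _
    have hb' : Filter.Tendsto (fun T : ℝ => F (-T)) Filter.atTop (nhds 0) := by
      refine squeeze_zero_norm' ?_ tendsto_inv_atTop_zero
      filter_upwards [Filter.eventually_ge_atTop (1:ℝ)] with T hT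
      · rw [hF, norm_div]
        have h1 : ‖Complex.exp (I * (-T : ℝ) * x)‖ = 1 := by
          rw [Complex.norm_exp]
          have : (I * ((-T : ℝ):ℂ) * (x:ℝ)).re = 0 := by simp
          rw [this, Real.exp_zero]
        rw [h1, one_div]
        apply inv_anti₀ (by linarith)
        calc (T:ℝ) = |(((-T : ℝ):ℂ) + I * k').re| := by
              have hre : (((-T : ℝ):ℂ) + I * k').re = -T := by simp
              rw [hre, abs_neg, _root_.abs_of_nonneg (by linarith : (0:ℝ) ≤ T)]
          _ ≤ ‖(((-T:ℝ)):ℂ) + I * k'‖ := Complex.abs_re_le_norm _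
    have h2int : MeasureTheory.Integrable F2 := by
      have := integrable_pow_inv k' hk.ne 2 le_rfl x
      simpa [hF2] using this
    have h2val : ∫ t : ℝ, F2 t = (2 * Real.pi * I ^ 2 / (Nat.factorial 1) : ℂ) * (x:ℂ) ^ 1
        * Complex.exp (k' * x) := by
      have := main_integral k' hk 2 le_rfl x hx
      simpa [hF2] using this
    have h2tend : Filter.Tendsto (fun T : ℝ => ∫ t : ℝ in (-T)..T, F2 t) Filter.atTop
        (nhds ((2 * Real.pi * I ^ 2 / (Nat.factorial 1) : ℂ) * (x:ℂ) ^ 1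
          * Complex.exp (k' * x))) := by
      rw [← h2val]
      exact MeasureTheory.intervalIntegral_tendsto_integral h2int
        tendsto_neg_atTop_atBot Filter.tendsto_id
    have hfinal := ((hb.sub hb').add h2tend).div_const (I * (x:ℂ))
    have h3 := hfinal.congr fun T => (key T).symm
    convert h3 using 2
    · simp [hF]
    simp only [Nat.sub_self, pow_zero, pow_one, Nat.factorial_one, Nat.factorial_zero,
      Nat.cast_one, zero_sub, mul_one]
    rw [eq_div_iff hIx]
    ring_nf
  · -- case 2 ≤ n
    have hint := integrable_pow_inv k' hk.ne n h2 x
    have htend := MeasureTheory.intervalIntegral_tendsto_integral hint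
      tendsto_neg_atTop_atBot Filter.tendsto_id
    rw [main_integral k' hk n h2 x hx] at htend
    exact htend
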